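/- Each equivalence class of the end-position relation has a unique longest member: for any substring u of S, the equivalence class [u] = { w ∈ Substr(S) : EndPos_S(w) = EndPos_S(u) } contains a unique element of maximal length, and every member of [u] is a suffix of this longest member. -/

import Mathlib

/-- `endPos S u` is the set of (0-indexed) ending positions `j` of occurrences of `u` in `S`,
i.e. positions `j` such that `u` is a suffix of `S[0..j]`. -/
def endPos {α : Type*} (S u : List α) : Set ℕ := {j | j < S.length ∧ u <:+ S.take (j + 1)}

lemma endPos_nonempty {α : Type*} {S u : List α} (hu : u <:+: S) (hune : u ≠ []) :
    ∃ j, j ∈ endPos S u := by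
  obtain ⟨s, t, hst⟩ := hu
  have h1 : 1 ≤ u.length := List.length_pos_iff.mpr hune
  have hlen : s.length + u.length ≤ S.length := by
    rw [← hst]; simp [List.length_append]
  have htake : S.take (s.length + u.length) = s ++ u := by
    rw [← hst, List.append_assoc, List.take_length_add_append, List.take_left]
  refine ⟨s.length + u.length - 1, ⟨by omega, ?_⟩⟩
  have heq : s.length + u.length - 1 + 1 = s.length + u.length := by omega
  rw [heq, htake]
  exact List.suffix_append s u

/-- Each end-position equivalence class has a unique longest member,
and every member of the class is a suffix of it. -/
theorem stmt5 {α : Type*} (S u : List α) (hu : u <:+: S) (hune : u ≠ []) :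
    ∃ v, (v <:+: S ∧ v ≠ [] ∧ endPos S v = endPos S u) ∧
      (∀ w, (w <:+: S ∧ w ≠ [] ∧ endPos S w = endPos S u) → w.length ≤ v.length) ∧
      (∀ w, (w <:+: S ∧ w ≠ [] ∧ endPos S w = endPos S u) → w <:+ v) ∧
      ∀ v', (v' <:+: S ∧ v' ≠ [] ∧ endPos S v' = endPos S u) →
        (∀ w, (w <:+: S ∧ w ≠ [] ∧ endPos S w = endPos S u) → w.length ≤ v'.length) →
        v' = v := by
  classical
  set P : List α → Prop := fun w => w <:+: S ∧ w ≠ [] ∧ endPos S w = endPos S u with hP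
  obtain ⟨j, hj⟩ := endPos_nonempty hu hune
  -- any two members of the class are suffix-comparable
  have hcomp : ∀ w₁ w₂, P w₁ → P w₂ → w₁ <:+ w₂ ∨ w₂ <:+ w₁ := by
    intro w₁ w₂ h₁ h₂
    have hj₁ : j ∈ endPos S w₁ := h₁.2.2 ▸ hj
    have hj₂ : j ∈ endPos S w₂ := h₂.2.2 ▸ hj
    exact List.suffix_or_suffix_of_suffix hj₁.2 hj₂.2
  set Q : ℕ → Prop := fun n => ∃ w, P w ∧ w.length = n with hQ
  have hPu : P u := ⟨hu, hune, rfl⟩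
  have hQu : Q u.length := ⟨u, hPu, rfl⟩
  have hub : u.length ≤ S.length := hu.length_le
  set N := Nat.findGreatest Q S.length with hN
  obtain ⟨v, hPv, hvlen⟩ : Q N := Nat.findGreatest_spec hub hQu
  have hmax : ∀ w, P w → w.length ≤ v.length := by
    intro w hw
    rw [hvlen]
    exact Nat.le_findGreatest hw.1.length_le ⟨w, hw, rfl⟩
  refine ⟨v, hPv, hmax, ?_, ?_⟩
  · intro w hw
    rcases hcomp w v hw hPv with h | h
    · exact h
    · have hvw : v = w := h.eq_of_length (le_antisymm h.length_le (hmax w hw))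
      rw [hvw]
  · intro v' hv' hmax'
    rcases hcomp v' v hv' hPv with h | h
    · exact h.eq_of_length (le_antisymm h.length_le (hmax' v hPv))
    · exact (h.eq_of_length (le_antisymm h.length_le (hmax v' hv'))).symm
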